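/- Let Σ = {A_j : j ∈ J} be a finite set of real n×n matrices. If Σ is both LCP and RCP, then Σ is transversal, i.e., for every subset J' ⊆ J one has the direct sum decomposition N_{J'} ⊕ R_{J'} = ℝⁿ. -/

import Mathlib

open Filter Topology Matrix

attribute [local instance] Matrix.normedAddCommGroup

/-- Left products `L_m = A_{j_m} ⋯ A_{j_1}` (with `L_0 = I`). -/
noncomputable def leftProd {n k : ℕ} (A : Fin k → Matrix (Fin n) (Fin n) ℝ)
    (j : ℕ → Fin k) : ℕ → Matrix (Fin n) (Fin n) ℝ
  | 0 => 1
  | m + 1 => A (j m) * leftProd A j m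

/-- Right products `R_m = A_{j_1} ⋯ A_{j_m}` (with `R_0 = I`). -/
noncomputable def rightProd {n k : ℕ} (A : Fin k → Matrix (Fin n) (Fin n) ℝ)
    (j : ℕ → Fin k) : ℕ → Matrix (Fin n) (Fin n) ℝ
  | 0 => 1
  | m + 1 => rightProd A j m * A (j m)

/-- Σ is LCP: for every sequence of indices the left products converge. -/
def IsLCP {n k : ℕ} (A : Fin k → Matrix (Fin n) (Fin n) ℝ) : Prop :=
  ∀ j : ℕ → Fin k, ∃ L : Matrix (Fin n) (Fin n) ℝ,
    Tendsto (leftProd A j) atTop (𝓝 L)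

/-- Σ is RCP: for every sequence of indices the right products converge. -/
def IsRCP {n k : ℕ} (A : Fin k → Matrix (Fin n) (Fin n) ℝ) : Prop :=
  ∀ j : ℕ → Fin k, ∃ R : Matrix (Fin n) (Fin n) ℝ,
    Tendsto (rightProd A j) atTop (𝓝 R)

/-- `N_{J'} = ∩_{j ∈ J'} ker (I - A_j)`. -/
noncomputable def Nspace {n k : ℕ} (A : Fin k → Matrix (Fin n) (Fin n) ℝ)
    (J' : Set (Fin k)) : Submodule ℝ (Fin n → ℝ) :=
  ⨅ j ∈ J', LinearMap.ker (Matrix.mulVecLin (1 - A j))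

/-- `R_{J'} = span of ∪_{j ∈ J'} range (I - A_j)`. -/
noncomputable def Rspace {n k : ℕ} (A : Fin k → Matrix (Fin n) (Fin n) ℝ)
    (J' : Set (Fin k)) : Submodule ℝ (Fin n → ℝ) :=
  ⨆ j ∈ J', LinearMap.range (Matrix.mulVecLin (1 - A j))

/-- Σ is 0-transversal: `N_{J'} ∩ R_{J'} = {0}` for every `J' ⊆ J`. -/
def IsZeroTransversal {n k : ℕ} (A : Fin k → Matrix (Fin n) (Fin n) ℝ) : Prop :=
  ∀ J' : Set (Fin k), Nspace A J' ⊓ Rspace A J' = ⊥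

/-- Σ is ℝⁿ-transversal: `N_{J'} + R_{J'} = ℝⁿ` for every `J' ⊆ J`. -/
def IsRnTransversal {n k : ℕ} (A : Fin k → Matrix (Fin n) (Fin n) ℝ) : Prop :=
  ∀ J' : Set (Fin k), Nspace A J' ⊔ Rspace A J' = ⊤

/-- Σ is transversal: `N_{J'} ⊕ R_{J'} = ℝⁿ` for every `J' ⊆ J`. -/
def IsTransversal {n k : ℕ} (A : Fin k → Matrix (Fin n) (Fin n) ℝ) : Prop :=
  IsZeroTransversal A ∧ IsRnTransversal A

/-! ### Auxiliary lemmas -/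

lemma leftProd_add {n k : ℕ} (A : Fin k → Matrix (Fin n) (Fin n) ℝ)
    (j : ℕ → Fin k) (b a : ℕ) :
    leftProd A j (b + a) = leftProd A (fun i => j (i + b)) a * leftProd A j b := by
  induction a with
  | zero => simp [leftProd]
  | succ a ih =>
      have : b + (a + 1) = (b + a) + 1 := by omega
      rw [this]
      show A (j (b + a)) * leftProd A j (b + a) = _
      rw [ih]
      show _ = A (j (a + b)) * leftProd A (fun i => j (i + b)) a * leftProd A j b
      rw [Nat.add_comm a b, mul_assoc]

lemma range_le_Rspace {n k : ℕ} (A : Fin k → Matrix (Fin n) (Fin n) ℝ)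
    {J' : Set (Fin k)} {j' : Fin k} (hj' : j' ∈ J') :
    LinearMap.range (Matrix.mulVecLin (1 - A j')) ≤ Rspace A J' :=
  le_iSup₂ (f := fun j _ => LinearMap.range (Matrix.mulVecLin (1 - A j))) j' hj'

lemma sub_leftProd_mem {n k : ℕ} (A : Fin k → Matrix (Fin n) (Fin n) ℝ)
    (j : ℕ → Fin k) {J' : Set (Fin k)} (hj : ∀ i, j i ∈ J') (x : Fin n → ℝ) :
    ∀ m, x - (leftProd A j m).mulVec x ∈ Rspace A J' := by
  intro m
  induction m with
  | zero => simp [leftProd]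
  | succ m ih =>
      have key : x - (leftProd A j (m+1)).mulVec x
          = (1 - A (j m)).mulVec ((leftProd A j m).mulVec x)
            + (x - (leftProd A j m).mulVec x) := by
        show x - (A (j m) * leftProd A j m).mulVec x = _
        rw [Matrix.sub_mulVec, Matrix.one_mulVec, ← Matrix.mulVec_mulVec]
        abel
      rw [key]
      exact Submodule.add_mem _
        (range_le_Rspace A (hj m)
          ⟨(leftProd A j m).mulVec x, by simp only [Matrix.mulVecLin_apply]⟩) ih

/-- LCP implies ℝⁿ-transversality. -/
lemma lcp_rn {n k : ℕ} (A : Fin k → Matrix (Fin n) (Fin n) ℝ)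
    (hLCP : IsLCP A) : IsRnTransversal A := by
  intro J'
  rcases J'.eq_empty_or_nonempty with rfl | ⟨a0, ha0⟩
  · have hN : Nspace A (∅ : Set (Fin k)) = ⊤ := by simp [Nspace]
    rw [hN, top_sup_eq]
  · classical
    set l := J'.toFinite.toFinset.toList with hl_def
    have hl : ∀ a, a ∈ l ↔ a ∈ J' := by
      intro a; rw [hl_def, Finset.mem_toList, Set.Finite.mem_toFinset]
    have hlen : 0 < l.length := List.length_pos_of_mem ((hl a0).2 ha0)
    set r := l.length with hr_def
    set j : ℕ → Fin k := fun i => l.get ⟨i % r, Nat.mod_lt _ hlen⟩ with hj_def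
    have hjmem : ∀ i, j i ∈ J' := fun i => (hl _).1 (l.get_mem _)
    have hper : ∀ m, (fun i => j (i + m * r)) = j := by
      intro m; funext i
      simp only [hj_def]
      congr 1
      exact Fin.ext (by simp [Nat.add_mul_mod_self_right])
    obtain ⟨L, hL⟩ := hLCP j
    rw [eq_top_iff]
    rintro x -
    have cont : Continuous (fun M : Matrix (Fin n) (Fin n) ℝ => M.mulVec x) :=
      Continuous.matrix_mulVec continuous_id continuous_const
    set u := L.mulVec x with hu_def
    have hsub : ∀ s : ℕ, Tendsto (fun m => leftProd A j (m * r + s)) atTop (𝓝 L) := by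
      intro s
      exact hL.comp (tendsto_atTop_mono
        (fun m => le_trans (Nat.le_mul_of_pos_right m hlen) (Nat.le_add_right _ s))
        tendsto_id)
    have hshift : ∀ s m, leftProd A j (m * r + s)
        = leftProd A j s * leftProd A j (m * r) := by
      intro s m
      rw [leftProd_add, hper]
    have hLrx : Tendsto (fun m => (leftProd A j (m * r)).mulVec x) atTop (𝓝 u) :=
      (cont.tendsto L).comp (hsub 0)
    have hCu : ∀ s, (leftProd A j s).mulVec u = u := by
      intro s
      have contc : Continuous (fun y : Fin n → ℝ => (leftProd A j s).mulVec y) :=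
        (Matrix.mulVecLin (leftProd A j s)).continuous_of_finiteDimensional
      have h2 : Tendsto (fun m => (leftProd A j (m * r + s)).mulVec x) atTop
          (𝓝 ((leftProd A j s).mulVec u)) := by
        have : (fun m => (leftProd A j (m * r + s)).mulVec x)
            = fun m => (leftProd A j s).mulVec ((leftProd A j (m * r)).mulVec x) := by
          funext m; rw [hshift s m, ← Matrix.mulVec_mulVec]
        rw [this]
        exact (contc.tendsto u).comp hLrx
      have h1 : Tendsto (fun m => (leftProd A j (m * r + s)).mulVec x) atTop (𝓝 u) :=
        (cont.tendsto L).comp (hsub s)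
      exact tendsto_nhds_unique h2 h1
    have hAu : ∀ i : ℕ, (A (j i)).mulVec u = u := by
      intro i
      have h2 := hCu (i + 1)
      have heq : (leftProd A j (i + 1)).mulVec u
          = (A (j i)).mulVec ((leftProd A j i).mulVec u) :=
        (Matrix.mulVec_mulVec u (A (j i)) (leftProd A j i)).symm
      rw [heq, hCu i] at h2
      exact h2
    have hu : u ∈ Nspace A J' := by
      simp only [Nspace, Submodule.mem_iInf]
      intro j' hj'
      obtain ⟨idx, hidx⟩ : ∃ i : ℕ, j i = j' := by
        obtain ⟨idx, hidx⟩ := List.mem_iff_get.mp ((hl j').2 hj')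
        exact ⟨idx, by
          simp only [hj_def]
          rw [← hidx]
          congr 1
          exact Fin.ext (Nat.mod_eq_of_lt idx.isLt)⟩
      rw [LinearMap.mem_ker, Matrix.mulVecLin_apply, Matrix.sub_mulVec,
        Matrix.one_mulVec, ← hidx, hAu idx, sub_self]
    have hv : x - u ∈ Rspace A J' := by
      have hcl : IsClosed ((Rspace A J' : Set (Fin n → ℝ))) :=
        Submodule.closed_of_finiteDimensional _
      have htend : Tendsto (fun m => x - (leftProd A j m).mulVec x) atTop
          (𝓝 (x - u)) :=
        tendsto_const_nhds.sub ((cont.tendsto L).comp hL)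
      exact hcl.mem_of_tendsto htend
        (Eventually.of_forall (sub_leftProd_mem A j hjmem x))
    exact Submodule.mem_sup.mpr ⟨u, hu, x - u, hv, by abel⟩

lemma rightProd_transpose {n k : ℕ} (A : Fin k → Matrix (Fin n) (Fin n) ℝ)
    (j : ℕ → Fin k) (m : ℕ) :
    leftProd (fun i => (A i)ᵀ) j m = (rightProd A j m)ᵀ := by
  induction m with
  | zero => simp [leftProd, rightProd]
  | succ m ih => show (A (j m))ᵀ * leftProd (fun i => (A i)ᵀ) j m = _
                 rw [ih, rightProd, Matrix.transpose_mul]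

/-- RCP implies the transposed family is LCP. -/
lemma rcp_lcp_transpose {n k : ℕ} (A : Fin k → Matrix (Fin n) (Fin n) ℝ)
    (hRCP : IsRCP A) : IsLCP (fun i => (A i)ᵀ) := by
  intro j
  obtain ⟨R, hR⟩ := hRCP j
  refine ⟨Rᵀ, ?_⟩
  have he : leftProd (fun i => (A i)ᵀ) j = fun m => (rightProd A j m)ᵀ :=
    funext (rightProd_transpose A j)
  rw [he]
  exact (((Continuous.matrix_transpose continuous_id).tendsto R)).comp hR

noncomputable def dotLeft {n : ℕ} (u : Fin n → ℝ) : (Fin n → ℝ) →ₗ[ℝ] ℝ where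
  toFun y := u ⬝ᵥ y
  map_add' y z := by simp [dotProduct_add]
  map_smul' c y := by simp [dotProduct_smul]

noncomputable def dotRight {n : ℕ} (x : Fin n → ℝ) : (Fin n → ℝ) →ₗ[ℝ] ℝ where
  toFun y := y ⬝ᵥ x
  map_add' y z := by simp [add_dotProduct]
  map_smul' c y := by simp [smul_dotProduct]

/-- ℝⁿ-transversality of the transposed family implies 0-transversality. -/
lemma zero_part {n k : ℕ} (A : Fin k → Matrix (Fin n) (Fin n) ℝ)
    (hT : IsRnTransversal (fun i => (A i)ᵀ)) : IsZeroTransversal A := by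
  intro J'
  rw [eq_bot_iff]
  rintro x ⟨hxN, hxR⟩
  have hx : x ∈ Nspace (fun i => (A i)ᵀ) J' ⊔ Rspace (fun i => (A i)ᵀ) J' := by
    rw [hT J']; trivial
  obtain ⟨u, hu, v, hv, huv⟩ := Submodule.mem_sup.mp hx
  have hux : u ⬝ᵥ x = 0 := by
    have hle : Rspace A J' ≤ LinearMap.ker (dotLeft u) := by
      refine iSup₂_le fun j' hj' => ?_
      rintro _ ⟨z, rfl⟩
      have hu' : (1 - (A j')ᵀ).mulVec u = 0 := by
        have h1 := (Submodule.mem_iInf _).mp hu j'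
        have h2 := (Submodule.mem_iInf _).mp h1 hj'
        simpa [Matrix.mulVecLin_apply, Matrix.sub_mulVec, Matrix.mulVec_transpose] using h2
      show u ⬝ᵥ (Matrix.mulVecLin (1 - A j')) z = 0
      rw [Matrix.mulVecLin_apply, Matrix.dotProduct_mulVec]
      have hz : u ᵥ* (1 - A j') = 0 := by
        rw [← Matrix.mulVec_transpose, Matrix.transpose_sub, Matrix.transpose_one, hu']
      rw [hz, zero_dotProduct]
    exact hle hxR
  have hvx : v ⬝ᵥ x = 0 := by
    have hle : Rspace (fun i => (A i)ᵀ) J' ≤ LinearMap.ker (dotRight x) := by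
      refine iSup₂_le fun j' hj' => ?_
      rintro _ ⟨z, rfl⟩
      have hx' : (1 - A j').mulVec x = 0 := by
        have h1 := (Submodule.mem_iInf _).mp hxN j'
        have h2 := (Submodule.mem_iInf _).mp h1 hj'
        simpa [Matrix.mulVecLin_apply, Matrix.sub_mulVec] using h2
      show (Matrix.mulVecLin (1 - (A j')ᵀ)) z ⬝ᵥ x = 0
      rw [Matrix.mulVecLin_apply, dotProduct_comm, Matrix.dotProduct_mulVec,
        ← Matrix.mulVec_transpose]
      have ht : (1 - (A j')ᵀ)ᵀ = 1 - A j' := by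
        rw [Matrix.transpose_sub, Matrix.transpose_one, Matrix.transpose_transpose]
      rw [ht, hx', zero_dotProduct]
    exact hle hv
  have hxx : x ⬝ᵥ x = 0 := by
    nth_rewrite 1 [← huv]
    rw [add_dotProduct, hux, hvx, add_zero]
  simpa using dotProduct_self_eq_zero.mp hxx

/-- If Σ is LCP and RCP then Σ is transversal. -/
theorem lcp_rcp_imp_transversal {n k : ℕ} (A : Fin k → Matrix (Fin n) (Fin n) ℝ)
    (hLCP : IsLCP A) (hRCP : IsRCP A) : IsTransversal A :=
  ⟨zero_part A (lcp_rn (fun i => (A i)ᵀ) (rcp_lcp_transpose A hRCP)), lcp_rn A hLCP⟩
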